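/- arXiv:2207.06073 — 2 statements merged into one kernel-verified Lean document; each statement's English description precedes it below -/
import Mathlib

section
/- There exists a universal constant C > 0 with the following property. Let Q₁ = [−1/2,1/2]³, let Q₂, Q₃ ⊂ ℝ³ be cubes of side lengths in [1/4,4] with Q₂, Q₃ ⊂ B_{10}(0), and let v ∈ L¹(B_{10}(0)). Then ∫_{Q₁} ∫_{Q₂} ∫_{Q₃} ∫_{Sim(x₁,x₂,x₃)} |v(z)| dH²(z) dx₃ dx₂ dx₁ ≤ C ∫_{B_{10}(0)} |v(z)| dz. -/
open MeasureTheory Metric ENNReal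

noncomputable section

local notation "E3" => EuclideanSpace ℝ (Fin 3)

/-- The closed axis-parallel cube with center `c` and side length `l`. -/
def cube (c : E3) (l : ℝ) : Set E3 :=
  {x | ∀ i : Fin 3, |x i - c i| ≤ l / 2}

section Aux

open NNReal Set

abbrev P2 := Fin 2 → ℝ

def S2 : Set P2 := {s | 0 ≤ s 0 ∧ 0 ≤ s 1 ∧ s 0 + s 1 ≤ 1}

def Sc : Set P2 := {s | 0 ≤ s 0 ∧ 0 ≤ s 1 ∧ s 0 + s 1 ≤ 1 ∧ 1/3 ≤ s 1}

lemma measurableSet_Sc : MeasurableSet Sc := by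
  have : Sc = (fun s : P2 => s 0) ⁻¹' Ici 0 ∩ ((fun s : P2 => s 1) ⁻¹' Ici 0 ∩
      ((fun s : P2 => s 0 + s 1) ⁻¹' Iic 1 ∩ (fun s : P2 => s 1) ⁻¹' Ici (1/3))) := by
    ext s; simp [Sc, and_assoc]
  rw [this]
  exact ((measurable_pi_apply 0) measurableSet_Ici).inter
    (((measurable_pi_apply 1) measurableSet_Ici).inter
      ((((measurable_pi_apply 0).add (measurable_pi_apply 1)) measurableSet_Iic).inter
        ((measurable_pi_apply 1) measurableSet_Ici)))

lemma volume_Sc : volume Sc ≤ 1 := by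
  have h : Sc ⊆ Set.pi Set.univ (fun _ : Fin 2 => Icc (0:ℝ) 1) := by
    rintro s ⟨h0, h1, hs, _⟩
    intro i _
    fin_cases i <;> constructor <;> simp_all <;> linarith
  calc volume Sc ≤ volume (Set.pi Set.univ (fun _ : Fin 2 => Icc (0:ℝ) 1)) := measure_mono h
    _ = 1 := by rw [volume_pi_pi]; simp [Real.volume_Icc]

def FF (y₁ y₂ y₃ : E3) (s : P2) : E3 := (1 - s 0 - s 1) • y₁ + s 0 • y₂ + s 1 • y₃

lemma cube_eq (c : E3) (l : ℝ) : cube c l =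
    (MeasurableEquiv.toLp 2 (Fin 3 → ℝ)).symm ⁻¹'
      (Set.pi Set.univ fun i => Icc (c i - l/2) (c i + l/2)) := by
  ext x
  simp only [cube, Set.mem_preimage, Set.mem_pi, Set.mem_univ, forall_true_left, Set.mem_setOf_eq,
    Set.mem_Icc]
  refine forall_congr' fun i => ?_
  have : (MeasurableEquiv.toLp 2 (Fin 3 → ℝ)).symm x i = x i := rfl
  rw [this, abs_le]
  constructor <;> intro h <;> constructor <;> linarith [h.1, h.2]

lemma measurableSet_cube (c : E3) (l : ℝ) : MeasurableSet (cube c l) := by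
  rw [cube_eq]
  exact (MeasurableEquiv.toLp 2 (Fin 3 → ℝ)).symm.measurable
    (MeasurableSet.univ_pi fun i => measurableSet_Icc)

lemma volume_cube (c : E3) (l : ℝ) : volume (cube c l) = ENNReal.ofReal l ^ 3 := by
  rw [cube_eq]
  rw [(EuclideanSpace.volume_preserving_symm_measurableEquiv_toLp (Fin 3)).measure_preimage
    (MeasurableSet.univ_pi fun i => measurableSet_Icc).nullMeasurableSet]
  rw [volume_pi_pi]
  simp only [Real.volume_Icc]
  have : ∀ i : Fin 3, c i + l/2 - (c i - l/2) = l := fun i => by ring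
  simp [this, Finset.prod_const]

lemma volume_cube_le {c : E3} {l : ℝ} (hl : l ≤ 4) : volume (cube c l) ≤ 64 := by
  rw [volume_cube]
  calc ENNReal.ofReal l ^ 3 ≤ ENNReal.ofReal 4 ^ 3 := by
        gcongr ?_ ^ 3
        exact ENNReal.ofReal_le_ofReal hl
    _ = 64 := by
        rw [← ENNReal.ofReal_pow (by norm_num)]
        norm_num

lemma cube01_norm {x : E3} (hx : x ∈ cube 0 1) : ‖x‖ ≤ 10 := by
  have h : ∀ i : Fin 3, |x i| ≤ 1/2 := by
    intro i
    have := hx i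
    simpa using this
  rw [EuclideanSpace.norm_eq]
  have hsum : (∑ i, ‖x i‖ ^ 2) ≤ 3/4 := by
    rw [Fin.sum_univ_three]
    have h0 := h 0; have h1 := h 1; have h2 := h 2
    rw [Real.norm_eq_abs, Real.norm_eq_abs, Real.norm_eq_abs]
    nlinarith [abs_nonneg (x 0), abs_nonneg (x 1), abs_nonneg (x 2),
      sq_abs (x 0), sq_abs (x 1), sq_abs (x 2)]
  calc Real.sqrt (∑ i, ‖x i‖ ^ 2) ≤ Real.sqrt (3/4) := Real.sqrt_le_sqrt hsum
    _ ≤ Real.sqrt 1 := Real.sqrt_le_sqrt (by norm_num)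
    _ ≤ 10 := by rw [Real.sqrt_one]; norm_num

lemma lintegral_shift_smul {g : E3 → ℝ≥0∞} (hg : Measurable g) (K : E3) {r : ℝ}
    (hr : 1/3 ≤ r) :
    ∫⁻ x, g (K + r • x) ∂(volume : Measure E3) ≤ 27 * ∫⁻ z, g z := by
  have hr0 : r ≠ 0 := by positivity
  have hmeas : Measurable fun y : E3 => g (K + y) :=
    hg.comp (measurable_const.add measurable_id)
  have hsm : Measurable (r • · : E3 → E3) := measurable_const_smul r
  have h1 : ∫⁻ x, g (K + r • x) ∂(volume : Measure E3)
      = ∫⁻ y, g (K + y) ∂(Measure.map (r • · : E3 → E3) volume) := by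
    rw [lintegral_map hmeas hsm]
  rw [h1, Measure.map_addHaar_smul volume hr0, lintegral_smul_measure,
    lintegral_add_left_eq_self g K, finrank_euclideanSpace_fin]
  have h3 : ENNReal.ofReal |(r ^ 3)⁻¹| ≤ 27 := by
    have hrp : (0:ℝ) < r := by linarith
    have hc : (1/27 : ℝ) ≤ r^3 := by nlinarith [sq_nonneg r, sq_nonneg (r - 1/3)]
    have : |(r ^ 3)⁻¹| = (r^3)⁻¹ := abs_of_pos (by positivity)
    rw [this]
    have : (r^3)⁻¹ ≤ 27 := by
      rw [inv_le_comm₀ (by positivity) (by norm_num)]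
      linarith
    calc ENNReal.ofReal (r^3)⁻¹ ≤ ENNReal.ofReal 27 := ENNReal.ofReal_le_ofReal this
      _ = 27 := by norm_num
  exact mul_le_mul_left h3 _

lemma lipschitz_FF {y₁ y₂ y₃ : E3} (h₁ : ‖y₁‖ ≤ 10) (h₂ : ‖y₂‖ ≤ 10) (h₃ : ‖y₃‖ ≤ 10) :
    LipschitzWith 40 (FF y₁ y₂ y₃) := by
  apply LipschitzWith.of_dist_le_mul
  intro a b
  have key : FF y₁ y₂ y₃ a - FF y₁ y₂ y₃ b
      = (a 0 - b 0) • (y₂ - y₁) + (a 1 - b 1) • (y₃ - y₁) := by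
    simp only [FF]
    module
  rw [dist_eq_norm, key]
  have n2 : ‖y₂ - y₁‖ ≤ 20 := by
    calc ‖y₂ - y₁‖ ≤ ‖y₂‖ + ‖y₁‖ := norm_sub_le _ _
      _ ≤ 20 := by linarith
  have n3 : ‖y₃ - y₁‖ ≤ 20 := by
    calc ‖y₃ - y₁‖ ≤ ‖y₃‖ + ‖y₁‖ := norm_sub_le _ _
      _ ≤ 20 := by linarith
  have d0 : |a 0 - b 0| ≤ dist a b := by
    rw [← Real.dist_eq]; exact dist_le_pi_dist a b 0
  have d1 : |a 1 - b 1| ≤ dist a b := by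
    rw [← Real.dist_eq]; exact dist_le_pi_dist a b 1
  calc ‖(a 0 - b 0) • (y₂ - y₁) + (a 1 - b 1) • (y₃ - y₁)‖
      ≤ ‖(a 0 - b 0) • (y₂ - y₁)‖ + ‖(a 1 - b 1) • (y₃ - y₁)‖ := norm_add_le _ _
    _ = |a 0 - b 0| * ‖y₂ - y₁‖ + |a 1 - b 1| * ‖y₃ - y₁‖ := by
        rw [norm_smul, norm_smul, Real.norm_eq_abs, Real.norm_eq_abs]
    _ ≤ dist a b * 20 + dist a b * 20 := by
        have h0 : (0:ℝ) ≤ |a 0 - b 0| := abs_nonneg _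
        have h1' : (0:ℝ) ≤ |a 1 - b 1| := abs_nonneg _
        have hd : (0:ℝ) ≤ dist a b := dist_nonneg
        nlinarith
    _ = ((40:ℝ≥0):ℝ) * dist a b := by push_cast; ring

lemma continuous_FF :
    Continuous fun q : (E3 × E3 × E3) × P2 => FF q.1.1 q.1.2.1 q.1.2.2 q.2 := by
  unfold FF; fun_prop

lemma meas_gFF {α : Type*} [MeasurableSpace α] [TopologicalSpace α] [OpensMeasurableSpace α]
    {g : E3 → ℝ≥0∞} (hg : Measurable g) {φ : α → (E3 × E3 × E3) × P2} (hφ : Continuous φ) :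
    Measurable fun a => g (FF (φ a).1.1 (φ a).1.2.1 (φ a).1.2.2 (φ a).2) :=
  hg.comp (continuous_FF.comp hφ).measurable

lemma image_bound {g : E3 → ℝ≥0∞} (hg : Measurable g) {y₁ y₂ y₃ : E3}
    (h₁ : ‖y₁‖ ≤ 10) (h₂ : ‖y₂‖ ≤ 10) (h₃ : ‖y₃‖ ≤ 10) :
    ∫⁻ z in FF y₁ y₂ y₃ '' Sc, g z ∂(μH[2]) ≤ 1600 * ∫⁻ s in Sc, g (FF y₁ y₂ y₃ s) := by
  set F := FF y₁ y₂ y₃ with hF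
  have lip : LipschitzWith 40 F := lipschitz_FF h₁ h₂ h₃
  have hFm : Measurable F := lip.continuous.measurable
  have hH : (μH[2] : Measure P2) = volume := by
    have := MeasureTheory.hausdorffMeasure_pi_real (ι := Fin 2)
    simpa using this
  have key : (μH[2] : Measure E3).restrict (F '' Sc)
      ≤ (1600 : ℝ≥0∞) • (volume.restrict Sc).map F := by
    rw [Measure.le_iff]
    intro A hA
    rw [Measure.restrict_apply hA]
    have sub : A ∩ F '' Sc ⊆ F '' (F ⁻¹' A ∩ Sc) := by
      rintro z ⟨hzA, s, hs, rfl⟩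
      exact ⟨s, ⟨hzA, hs⟩, rfl⟩
    have hest := lip.hausdorffMeasure_image_le (d := 2) (by norm_num) (F ⁻¹' A ∩ Sc)
    have hpow : ((40:ℝ≥0) : ℝ≥0∞) ^ (2:ℝ) = 1600 := by
      rw [show (2:ℝ) = ((2:ℕ):ℝ) by norm_num, ENNReal.rpow_natCast]
      norm_num
    rw [hpow, hH] at hest
    calc (μH[2] : Measure E3) (A ∩ F '' Sc) ≤ μH[2] (F '' (F ⁻¹' A ∩ Sc)) := measure_mono sub
      _ ≤ 1600 * volume (F ⁻¹' A ∩ Sc) := hest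
      _ = ((1600 : ℝ≥0∞) • (volume.restrict Sc).map F) A := by
          rw [Measure.smul_apply, Measure.map_apply hFm hA,
            Measure.restrict_apply (hFm hA)]
          simp [smul_eq_mul]
  calc ∫⁻ z in F '' Sc, g z ∂(μH[2])
      ≤ ∫⁻ z, g z ∂((1600 : ℝ≥0∞) • (volume.restrict Sc).map F) := lintegral_mono' key le_rfl
    _ = 1600 * ∫⁻ s in Sc, g (F s) := by
        rw [lintegral_smul_measure, lintegral_map hg hFm, smul_eq_mul]

lemma convex_image_FF (y₁ y₂ y₃ : E3) : Convex ℝ (FF y₁ y₂ y₃ '' S2) := by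
  rintro p ⟨s, hs, rfl⟩ q ⟨t, ht, rfl⟩ θ η hθ hη hθη
  refine ⟨θ • s + η • t, ?_, ?_⟩
  · obtain ⟨hs0, hs1, hssum⟩ := hs
    obtain ⟨ht0, ht1, htsum⟩ := ht
    refine ⟨?_, ?_, ?_⟩ <;> simp only [Pi.add_apply, Pi.smul_apply, smul_eq_mul]
    · positivity
    · positivity
    · nlinarith
  · simp only [FF, Pi.add_apply, Pi.smul_apply, smul_eq_mul]
    match_scalars
    · linear_combination -hθη
    · ring
    · ring

lemma hull_sub_image (x₁ x₂ x₃ : E3) :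
    convexHull ℝ {x₁, x₂, x₃} ⊆ FF x₁ x₂ x₃ '' S2 := by
  apply convexHull_min _ (convex_image_FF x₁ x₂ x₃)
  rintro z hz
  simp only [Set.mem_insert_iff, Set.mem_singleton_iff] at hz
  rcases hz with rfl | rfl | rfl
  · exact ⟨![0, 0], by norm_num [S2], by simp [FF]⟩
  · exact ⟨![1, 0], by norm_num [S2], by simp [FF]⟩
  · exact ⟨![0, 1], by norm_num [S2], by simp [FF]⟩

lemma image_sub_union (x₁ x₂ x₃ : E3) :
    FF x₁ x₂ x₃ '' S2 ⊆
      FF x₂ x₃ x₁ '' Sc ∪ FF x₃ x₁ x₂ '' Sc ∪ FF x₁ x₂ x₃ '' Sc := by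
  rintro z ⟨s, ⟨hs0, hs1, hsum⟩, rfl⟩
  by_cases hc : 1/3 ≤ s 1
  · exact Or.inr ⟨s, ⟨hs0, hs1, hsum, hc⟩, rfl⟩
  push_neg at hc
  by_cases hb : 1/3 ≤ s 0
  · -- coefficient of x₂ is s 0 ≥ 1/3 : use FF x₃ x₁ x₂ with s'' = ![1 - s 0 - s 1, s 0]
    refine Or.inl (Or.inr ⟨![1 - s 0 - s 1, s 0], ?_, ?_⟩)
    · refine ⟨by norm_num; linarith, by norm_num; linarith, ?_, by norm_num; linarith⟩
      norm_num; linarith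
    · simp only [FF, Matrix.cons_val_zero, Matrix.cons_val_one, Matrix.head_cons]
      match_scalars <;> ring
  push_neg at hb
  · -- coefficient of x₁ is 1 - s 0 - s 1 ≥ 1/3 : use FF x₂ x₃ x₁ with s' = ![s 1, 1 - s 0 - s 1]
    have ha : 1/3 ≤ 1 - s 0 - s 1 := by linarith
    refine Or.inl (Or.inl ⟨![s 1, 1 - s 0 - s 1], ?_, ?_⟩)
    · refine ⟨by norm_num; linarith, by norm_num; linarith, ?_, by norm_num; linarith⟩
      norm_num; linarith
    · simp only [FF, Matrix.cons_val_zero, Matrix.cons_val_one, Matrix.head_cons]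
      match_scalars <;> ring

lemma perm_bound {g : E3 → ℝ≥0∞} (hg : Measurable g)
    (μa μb μc : Measure E3) [SFinite μa] [SFinite μb] [SFinite μc]
    (hμa : μa Set.univ ≤ 64) (hμb : μb Set.univ ≤ 64) (hμc : μc ≤ volume) :
    ∫⁻ a, (∫⁻ b, (∫⁻ c, (∫⁻ s in Sc, g (FF a b c s)) ∂μc) ∂μb) ∂μa ≤ 110592 * ∫⁻ z, g z := by
  set I := ∫⁻ z, g z with hI
  have inner : ∀ a b : E3, (∫⁻ c, (∫⁻ s in Sc, g (FF a b c s)) ∂μc) ≤ 27 * I := by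
    intro a b
    have hmeas : AEMeasurable (Function.uncurry fun c s => g (FF a b c s))
        (μc.prod (volume.restrict Sc)) :=
      (meas_gFF hg (φ := fun p : E3 × P2 => ((a, b, p.1), p.2)) (by fun_prop)).aemeasurable
    rw [lintegral_lintegral_swap hmeas]
    have ptw : ∀ s ∈ Sc, (∫⁻ c, g (FF a b c s) ∂μc) ≤ 27 * I := by
      intro s hs
      have h1 : (∫⁻ c, g (FF a b c s) ∂μc) ≤ ∫⁻ c, g (FF a b c s) ∂volume :=
        lintegral_mono' hμc le_rfl
      exact h1.trans (lintegral_shift_smul hg ((1 - s 0 - s 1) • a + s 0 • b) hs.2.2.2)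
    calc (∫⁻ s in Sc, ∫⁻ c, g (FF a b c s) ∂μc)
        ≤ ∫⁻ _ in Sc, 27 * I := setLIntegral_mono' measurableSet_Sc ptw
      _ = 27 * I * volume Sc := setLIntegral_const _ _
      _ ≤ 27 * I * 1 := by gcongr; exact volume_Sc
      _ = 27 * I := mul_one _
  calc ∫⁻ a, (∫⁻ b, (∫⁻ c, (∫⁻ s in Sc, g (FF a b c s)) ∂μc) ∂μb) ∂μa
      ≤ ∫⁻ _, (∫⁻ _, 27 * I ∂μb) ∂μa :=
        lintegral_mono fun a => lintegral_mono fun b => inner a b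
    _ = ∫⁻ _, 27 * I * μb Set.univ ∂μa := lintegral_congr fun a => lintegral_const _
    _ = 27 * I * μb Set.univ * μa Set.univ := lintegral_const _
    _ ≤ 27 * I * 64 * 64 := by gcongr
    _ = 110592 * I := by ring

section ABC
variable (g : E3 → ℝ≥0∞)

def AA (x₁ x₂ x₃ : E3) : ℝ≥0∞ := ∫⁻ s in Sc, g (FF x₂ x₃ x₁ s)
def BB (x₁ x₂ x₃ : E3) : ℝ≥0∞ := ∫⁻ s in Sc, g (FF x₃ x₁ x₂ s)
def CC (x₁ x₂ x₃ : E3) : ℝ≥0∞ := ∫⁻ s in Sc, g (FF x₁ x₂ x₃ s)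

variable {g}

lemma mAA3 (hg : Measurable g) (x₁ x₂ : E3) : Measurable (AA g x₁ x₂) := by
  unfold AA
  exact Measurable.lintegral_prod_right (f := fun x₃ s => g (FF x₂ x₃ x₁ s))
    (meas_gFF hg (φ := fun q : E3 × P2 => ((x₂, q.1, x₁), q.2)) (by fun_prop))

lemma mBB3 (hg : Measurable g) (x₁ x₂ : E3) : Measurable (BB g x₁ x₂) := by
  unfold BB
  exact Measurable.lintegral_prod_right (f := fun x₃ s => g (FF x₃ x₁ x₂ s))
    (meas_gFF hg (φ := fun q : E3 × P2 => ((q.1, x₁, x₂), q.2)) (by fun_prop))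

lemma mCC3 (hg : Measurable g) (x₁ x₂ : E3) : Measurable (CC g x₁ x₂) := by
  unfold CC
  exact Measurable.lintegral_prod_right (f := fun x₃ s => g (FF x₁ x₂ x₃ s))
    (meas_gFF hg (φ := fun q : E3 × P2 => ((x₁, x₂, q.1), q.2)) (by fun_prop))

lemma mAA23 (hg : Measurable g) (x₁ : E3) : Measurable (Function.uncurry fun x₂ x₃ => AA g x₁ x₂ x₃) := by
  unfold AA
  exact meas_gFF hg (φ := fun q : (E3 × E3) × P2 => ((q.1.1, q.1.2, x₁), q.2))
    (by fun_prop) |>.lintegral_prod_right (f := fun p : E3 × E3 => fun s => g (FF p.1 p.2 x₁ s))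

lemma mBB23 (hg : Measurable g) (x₁ : E3) : Measurable (Function.uncurry fun x₂ x₃ => BB g x₁ x₂ x₃) := by
  unfold BB
  exact meas_gFF hg (φ := fun q : (E3 × E3) × P2 => ((q.1.2, x₁, q.1.1), q.2))
    (by fun_prop) |>.lintegral_prod_right (f := fun p : E3 × E3 => fun s => g (FF p.2 x₁ p.1 s))

lemma mCC23 (hg : Measurable g) (x₁ : E3) : Measurable (Function.uncurry fun x₂ x₃ => CC g x₁ x₂ x₃) := by
  unfold CC
  exact meas_gFF hg (φ := fun q : (E3 × E3) × P2 => ((x₁, q.1.1, q.1.2), q.2))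
    (by fun_prop) |>.lintegral_prod_right (f := fun p : E3 × E3 => fun s => g (FF x₁ p.1 p.2 s))

lemma mAA2 (hg : Measurable g) (ρ : Measure E3) [SFinite ρ] (x₁ : E3) : Measurable fun x₂ => ∫⁻ x₃, AA g x₁ x₂ x₃ ∂ρ :=
  Measurable.lintegral_prod_right (mAA23 hg x₁)

lemma mBB2 (hg : Measurable g) (ρ : Measure E3) [SFinite ρ] (x₁ : E3) : Measurable fun x₂ => ∫⁻ x₃, BB g x₁ x₂ x₃ ∂ρ :=
  Measurable.lintegral_prod_right (mBB23 hg x₁)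

lemma mCC2 (hg : Measurable g) (ρ : Measure E3) [SFinite ρ] (x₁ : E3) : Measurable fun x₂ => ∫⁻ x₃, CC g x₁ x₂ x₃ ∂ρ :=
  Measurable.lintegral_prod_right (mCC23 hg x₁)

lemma mAA123 (hg : Measurable g) (ρ : Measure E3) [SFinite ρ] : Measurable (Function.uncurry fun (x₁ x₂ : E3) => ∫⁻ x₃, AA g x₁ x₂ x₃ ∂ρ) := by
  unfold AA
  exact Measurable.lintegral_prod_right (f := fun (p : E3 × E3) x₃ => ∫⁻ s in Sc, g (FF p.2 x₃ p.1 s))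
    (Measurable.lintegral_prod_right (f := fun (q : (E3 × E3) × E3) s => g (FF q.1.2 q.2 q.1.1 s))
      (meas_gFF hg (φ := fun q : ((E3 × E3) × E3) × P2 => ((q.1.1.2, q.1.2, q.1.1.1), q.2))
        (by fun_prop)))

lemma mBB123 (hg : Measurable g) (ρ : Measure E3) [SFinite ρ] : Measurable (Function.uncurry fun (x₁ x₂ : E3) => ∫⁻ x₃, BB g x₁ x₂ x₃ ∂ρ) := by
  unfold BB
  exact Measurable.lintegral_prod_right (f := fun (p : E3 × E3) x₃ => ∫⁻ s in Sc, g (FF x₃ p.1 p.2 s))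
    (Measurable.lintegral_prod_right (f := fun (q : (E3 × E3) × E3) s => g (FF q.2 q.1.1 q.1.2 s))
      (meas_gFF hg (φ := fun q : ((E3 × E3) × E3) × P2 => ((q.1.2, q.1.1.1, q.1.1.2), q.2))
        (by fun_prop)))

lemma mCC123 (hg : Measurable g) (ρ : Measure E3) [SFinite ρ] : Measurable (Function.uncurry fun (x₁ x₂ : E3) => ∫⁻ x₃, CC g x₁ x₂ x₃ ∂ρ) := by
  unfold CC
  exact Measurable.lintegral_prod_right (f := fun (p : E3 × E3) x₃ => ∫⁻ s in Sc, g (FF p.1 p.2 x₃ s))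
    (Measurable.lintegral_prod_right (f := fun (q : (E3 × E3) × E3) s => g (FF q.1.1 q.1.2 q.2 s))
      (meas_gFF hg (φ := fun q : ((E3 × E3) × E3) × P2 => ((q.1.1.1, q.1.1.2, q.1.2), q.2))
        (by fun_prop)))

lemma mAA1 (hg : Measurable g) (ν ρ : Measure E3) [SFinite ν] [SFinite ρ] : Measurable fun x₁ => ∫⁻ x₂, (∫⁻ x₃, AA g x₁ x₂ x₃ ∂ρ) ∂ν :=
  Measurable.lintegral_prod_right (mAA123 hg ρ)

lemma mBB1 (hg : Measurable g) (ν ρ : Measure E3) [SFinite ν] [SFinite ρ] : Measurable fun x₁ => ∫⁻ x₂, (∫⁻ x₃, BB g x₁ x₂ x₃ ∂ρ) ∂ν :=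
  Measurable.lintegral_prod_right (mBB123 hg ρ)

lemma mCC1 (hg : Measurable g) (ν ρ : Measure E3) [SFinite ν] [SFinite ρ] : Measurable fun x₁ => ∫⁻ x₂, (∫⁻ x₃, CC g x₁ x₂ x₃ ∂ρ) ∂ν :=
  Measurable.lintegral_prod_right (mCC123 hg ρ)

-- swap helpers
lemma swapBB (hg : Measurable g) (ρ : Measure E3) [SFinite ρ] (μ₂ : Measure E3) [SFinite μ₂] (x₁ : E3) :
    (∫⁻ x₂, (∫⁻ x₃, BB g x₁ x₂ x₃ ∂ρ) ∂μ₂) = ∫⁻ x₃, (∫⁻ x₂, BB g x₁ x₂ x₃ ∂μ₂) ∂ρ :=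
  lintegral_lintegral_swap (mBB23 hg x₁).aemeasurable

lemma swapBB' (hg : Measurable g) (ρ : Measure E3) [SFinite ρ] (μ₁ : Measure E3) [SFinite μ₁] (μ₂ : Measure E3) [SFinite μ₂] :
    (∫⁻ x₁, (∫⁻ x₃, (∫⁻ x₂, BB g x₁ x₂ x₃ ∂μ₂) ∂ρ) ∂μ₁)
      = ∫⁻ x₃, (∫⁻ x₁, (∫⁻ x₂, BB g x₁ x₂ x₃ ∂μ₂) ∂μ₁) ∂ρ := by
  refine lintegral_lintegral_swap ?_
  unfold BB
  exact (Measurable.lintegral_prod_right (f := fun (p : E3 × E3) x₂ => ∫⁻ s in Sc, g (FF p.2 p.1 x₂ s))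
    (Measurable.lintegral_prod_right (f := fun (q : (E3 × E3) × E3) s => g (FF q.1.2 q.1.1 q.2 s))
      (meas_gFF hg (φ := fun q : ((E3 × E3) × E3) × P2 => ((q.1.1.2, q.1.1.1, q.1.2), q.2))
        (by fun_prop)))).aemeasurable

lemma swapAA (hg : Measurable g) (ρ : Measure E3) [SFinite ρ] (μ₁ : Measure E3) [SFinite μ₁] (μ₂ : Measure E3) [SFinite μ₂] :
    (∫⁻ x₁, (∫⁻ x₂, (∫⁻ x₃, AA g x₁ x₂ x₃ ∂ρ) ∂μ₂) ∂μ₁)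
      = ∫⁻ x₂, (∫⁻ x₁, (∫⁻ x₃, AA g x₁ x₂ x₃ ∂ρ) ∂μ₁) ∂μ₂ := by
  refine lintegral_lintegral_swap ?_
  unfold AA
  exact (Measurable.lintegral_prod_right (f := fun (p : E3 × E3) x₃ => ∫⁻ s in Sc, g (FF p.2 x₃ p.1 s))
    (Measurable.lintegral_prod_right (f := fun (q : (E3 × E3) × E3) s => g (FF q.1.2 q.2 q.1.1 s))
      (meas_gFF hg (φ := fun q : ((E3 × E3) × E3) × P2 => ((q.1.1.2, q.1.2, q.1.1.1), q.2))
        (by fun_prop)))).aemeasurable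

lemma swapAA' (hg : Measurable g) (ρ : Measure E3) [SFinite ρ] (μ₁ : Measure E3) [SFinite μ₁] (x₂ : E3) :
    (∫⁻ x₁, (∫⁻ x₃, AA g x₁ x₂ x₃ ∂ρ) ∂μ₁) = ∫⁻ x₃, (∫⁻ x₁, AA g x₁ x₂ x₃ ∂μ₁) ∂ρ := by
  refine lintegral_lintegral_swap ?_
  unfold AA
  exact (Measurable.lintegral_prod_right (f := fun (p : E3 × E3) s => g (FF x₂ p.2 p.1 s))
    (meas_gFF hg (φ := fun q : (E3 × E3) × P2 => ((x₂, q.1.2, q.1.1), q.2))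
      (by fun_prop))).aemeasurable

end ABC

lemma core_bound {g : E3 → ℝ≥0∞} (hg : Measurable g)
    {c₂ c₃ : E3} {l₂ l₃ : ℝ} (hl₂ : l₂ ≤ 4) (hl₃ : l₃ ≤ 4)
    (hQ₂ : cube c₂ l₂ ⊆ ball (0 : E3) 10) (hQ₃ : cube c₃ l₃ ⊆ ball (0 : E3) 10) :
    ∫⁻ x₁ in cube 0 1, ∫⁻ x₂ in cube c₂ l₂, ∫⁻ x₃ in cube c₃ l₃,
        ∫⁻ z in convexHull ℝ {x₁, x₂, x₃}, g z ∂(μH[2])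
      ≤ 530841600 * ∫⁻ z, g z := by
  have ptw : ∀ x₁ x₂ x₃ : E3, ‖x₁‖ ≤ 10 → ‖x₂‖ ≤ 10 → ‖x₃‖ ≤ 10 →
      (∫⁻ z in convexHull ℝ {x₁, x₂, x₃}, g z ∂(μH[2]))
        ≤ 1600 * (AA g x₁ x₂ x₃ + BB g x₁ x₂ x₃ + CC g x₁ x₂ x₃) := by
    intro x₁ x₂ x₃ h1 h2 h3
    have hsub := (hull_sub_image x₁ x₂ x₃).trans (image_sub_union x₁ x₂ x₃)
    have step1 : (∫⁻ z in convexHull ℝ {x₁, x₂, x₃}, g z ∂(μH[2]))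
        ≤ ∫⁻ z in FF x₂ x₃ x₁ '' Sc ∪ FF x₃ x₁ x₂ '' Sc ∪ FF x₁ x₂ x₃ '' Sc, g z ∂(μH[2]) :=
      lintegral_mono' (Measure.restrict_mono hsub le_rfl) le_rfl
    have rle : (μH[2] : Measure E3).restrict
          (FF x₂ x₃ x₁ '' Sc ∪ FF x₃ x₁ x₂ '' Sc ∪ FF x₁ x₂ x₃ '' Sc)
        ≤ ((μH[2] : Measure E3).restrict (FF x₂ x₃ x₁ '' Sc)
            + (μH[2] : Measure E3).restrict (FF x₃ x₁ x₂ '' Sc))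
            + (μH[2] : Measure E3).restrict (FF x₁ x₂ x₃ '' Sc) :=
      (Measure.restrict_union_le _ _).trans
        (add_le_add_left (Measure.restrict_union_le _ _) _)
    have step2 : (∫⁻ z in FF x₂ x₃ x₁ '' Sc ∪ FF x₃ x₁ x₂ '' Sc ∪ FF x₁ x₂ x₃ '' Sc, g z ∂(μH[2]))
        ≤ (∫⁻ z in FF x₂ x₃ x₁ '' Sc, g z ∂(μH[2]))
          + (∫⁻ z in FF x₃ x₁ x₂ '' Sc, g z ∂(μH[2]))
          + (∫⁻ z in FF x₁ x₂ x₃ '' Sc, g z ∂(μH[2])) := by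
      refine (lintegral_mono' rle le_rfl).trans_eq ?_
      rw [lintegral_add_measure, lintegral_add_measure]
    refine step1.trans (step2.trans ?_)
    have e1 := image_bound hg h2 h3 h1
    have e2 := image_bound hg h3 h1 h2
    have e3 := image_bound hg h1 h2 h3
    have : (∫⁻ z in FF x₂ x₃ x₁ '' Sc, g z ∂(μH[2]))
          + (∫⁻ z in FF x₃ x₁ x₂ '' Sc, g z ∂(μH[2]))
          + (∫⁻ z in FF x₁ x₂ x₃ '' Sc, g z ∂(μH[2]))
        ≤ 1600 * AA g x₁ x₂ x₃ + 1600 * BB g x₁ x₂ x₃ + 1600 * CC g x₁ x₂ x₃ :=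
      add_le_add (add_le_add e1 e2) e3
    refine this.trans_eq (by ring)
  have step : (∫⁻ x₁ in cube 0 1, ∫⁻ x₂ in cube c₂ l₂, ∫⁻ x₃ in cube c₃ l₃,
        ∫⁻ z in convexHull ℝ {x₁, x₂, x₃}, g z ∂(μH[2]))
      ≤ ∫⁻ x₁ in cube 0 1, ∫⁻ x₂ in cube c₂ l₂, ∫⁻ x₃ in cube c₃ l₃,
          1600 * (AA g x₁ x₂ x₃ + BB g x₁ x₂ x₃ + CC g x₁ x₂ x₃) := by
    refine setLIntegral_mono' (measurableSet_cube _ _) fun x₁ hx₁ => ?_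
    refine setLIntegral_mono' (measurableSet_cube _ _) fun x₂ hx₂ => ?_
    refine setLIntegral_mono' (measurableSet_cube _ _) fun x₃ hx₃ => ?_
    exact ptw x₁ x₂ x₃ (cube01_norm hx₁) (le_of_lt (mem_ball_zero_iff.1 (hQ₂ hx₂)))
      (le_of_lt (mem_ball_zero_iff.1 (hQ₃ hx₃)))
  have eq3 : ∀ x₁ x₂ : E3, (∫⁻ x₃ in cube c₃ l₃,
        1600 * (AA g x₁ x₂ x₃ + BB g x₁ x₂ x₃ + CC g x₁ x₂ x₃))
      = 1600 * ((∫⁻ x₃ in cube c₃ l₃, AA g x₁ x₂ x₃) + (∫⁻ x₃ in cube c₃ l₃, BB g x₁ x₂ x₃)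
          + (∫⁻ x₃ in cube c₃ l₃, CC g x₁ x₂ x₃)) := by
    intro x₁ x₂
    rw [lintegral_const_mul 1600 (f := fun x₃ => AA g x₁ x₂ x₃ + BB g x₁ x₂ x₃ + CC g x₁ x₂ x₃)
        (((mAA3 hg x₁ x₂).add (mBB3 hg x₁ x₂)).add (mCC3 hg x₁ x₂)),
      lintegral_add_left (f := fun x₃ => AA g x₁ x₂ x₃ + BB g x₁ x₂ x₃)
        ((mAA3 hg x₁ x₂).add (mBB3 hg x₁ x₂)),
      lintegral_add_left (mAA3 hg x₁ x₂)]
  have eq2 : ∀ x₁ : E3, (∫⁻ x₂ in cube c₂ l₂,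
        1600 * ((∫⁻ x₃ in cube c₃ l₃, AA g x₁ x₂ x₃) + (∫⁻ x₃ in cube c₃ l₃, BB g x₁ x₂ x₃)
          + (∫⁻ x₃ in cube c₃ l₃, CC g x₁ x₂ x₃)))
      = 1600 * ((∫⁻ x₂ in cube c₂ l₂, ∫⁻ x₃ in cube c₃ l₃, AA g x₁ x₂ x₃)
          + (∫⁻ x₂ in cube c₂ l₂, ∫⁻ x₃ in cube c₃ l₃, BB g x₁ x₂ x₃)
          + (∫⁻ x₂ in cube c₂ l₂, ∫⁻ x₃ in cube c₃ l₃, CC g x₁ x₂ x₃)) := by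
    intro x₁
    rw [lintegral_const_mul 1600 (f := fun x₂ => (∫⁻ x₃ in cube c₃ l₃, AA g x₁ x₂ x₃)
          + (∫⁻ x₃ in cube c₃ l₃, BB g x₁ x₂ x₃) + (∫⁻ x₃ in cube c₃ l₃, CC g x₁ x₂ x₃))
        (((mAA2 hg _ x₁).add (mBB2 hg _ x₁)).add (mCC2 hg _ x₁)),
      lintegral_add_left (f := fun x₂ => (∫⁻ x₃ in cube c₃ l₃, AA g x₁ x₂ x₃)
          + (∫⁻ x₃ in cube c₃ l₃, BB g x₁ x₂ x₃))
        ((mAA2 hg _ x₁).add (mBB2 hg _ x₁)),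
      lintegral_add_left (mAA2 hg _ x₁)]
  have eq1 : (∫⁻ x₁ in cube 0 1,
        1600 * ((∫⁻ x₂ in cube c₂ l₂, ∫⁻ x₃ in cube c₃ l₃, AA g x₁ x₂ x₃)
          + (∫⁻ x₂ in cube c₂ l₂, ∫⁻ x₃ in cube c₃ l₃, BB g x₁ x₂ x₃)
          + (∫⁻ x₂ in cube c₂ l₂, ∫⁻ x₃ in cube c₃ l₃, CC g x₁ x₂ x₃)))
      = 1600 * ((∫⁻ x₁ in cube 0 1, ∫⁻ x₂ in cube c₂ l₂, ∫⁻ x₃ in cube c₃ l₃, AA g x₁ x₂ x₃)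
          + (∫⁻ x₁ in cube 0 1, ∫⁻ x₂ in cube c₂ l₂, ∫⁻ x₃ in cube c₃ l₃, BB g x₁ x₂ x₃)
          + (∫⁻ x₁ in cube 0 1, ∫⁻ x₂ in cube c₂ l₂, ∫⁻ x₃ in cube c₃ l₃, CC g x₁ x₂ x₃)) := by
    rw [lintegral_const_mul 1600
        (f := fun x₁ => (∫⁻ x₂ in cube c₂ l₂, ∫⁻ x₃ in cube c₃ l₃, AA g x₁ x₂ x₃)
          + (∫⁻ x₂ in cube c₂ l₂, ∫⁻ x₃ in cube c₃ l₃, BB g x₁ x₂ x₃)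
          + (∫⁻ x₂ in cube c₂ l₂, ∫⁻ x₃ in cube c₃ l₃, CC g x₁ x₂ x₃))
        (((mAA1 hg _ _).add (mBB1 hg _ _)).add (mCC1 hg _ _)),
      lintegral_add_left (f := fun x₁ => (∫⁻ x₂ in cube c₂ l₂, ∫⁻ x₃ in cube c₃ l₃, AA g x₁ x₂ x₃)
          + (∫⁻ x₂ in cube c₂ l₂, ∫⁻ x₃ in cube c₃ l₃, BB g x₁ x₂ x₃))
        ((mAA1 hg _ _).add (mBB1 hg _ _)),
      lintegral_add_left (mAA1 hg _ _)]
  have hμ₁ : (volume.restrict (cube (0:E3) 1)) Set.univ ≤ 64 := by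
    rw [Measure.restrict_apply_univ]; exact volume_cube_le (by norm_num)
  have hμ₂ : (volume.restrict (cube c₂ l₂)) Set.univ ≤ 64 := by
    rw [Measure.restrict_apply_univ]; exact volume_cube_le hl₂
  have hμ₃ : (volume.restrict (cube c₃ l₃)) Set.univ ≤ 64 := by
    rw [Measure.restrict_apply_univ]; exact volume_cube_le hl₃
  have JC : (∫⁻ x₁ in cube 0 1, ∫⁻ x₂ in cube c₂ l₂, ∫⁻ x₃ in cube c₃ l₃, CC g x₁ x₂ x₃)
      ≤ 110592 * ∫⁻ z, g z := by
    unfold CC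
    exact perm_bound hg _ _ _ hμ₁ hμ₂ Measure.restrict_le_self
  have JB : (∫⁻ x₁ in cube 0 1, ∫⁻ x₂ in cube c₂ l₂, ∫⁻ x₃ in cube c₃ l₃, BB g x₁ x₂ x₃)
      ≤ 110592 * ∫⁻ z, g z := by
    calc (∫⁻ x₁ in cube 0 1, ∫⁻ x₂ in cube c₂ l₂, ∫⁻ x₃ in cube c₃ l₃, BB g x₁ x₂ x₃)
        = ∫⁻ x₁ in cube 0 1, ∫⁻ x₃ in cube c₃ l₃, ∫⁻ x₂ in cube c₂ l₂, BB g x₁ x₂ x₃ :=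
          lintegral_congr fun x₁ => swapBB hg _ _ x₁
      _ = ∫⁻ x₃ in cube c₃ l₃, ∫⁻ x₁ in cube 0 1, ∫⁻ x₂ in cube c₂ l₂, BB g x₁ x₂ x₃ :=
          swapBB' hg _ _ _
      _ ≤ 110592 * ∫⁻ z, g z := by
          unfold BB
          exact perm_bound hg _ _ _ hμ₃ hμ₁ Measure.restrict_le_self
  have JA : (∫⁻ x₁ in cube 0 1, ∫⁻ x₂ in cube c₂ l₂, ∫⁻ x₃ in cube c₃ l₃, AA g x₁ x₂ x₃)
      ≤ 110592 * ∫⁻ z, g z := by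
    calc (∫⁻ x₁ in cube 0 1, ∫⁻ x₂ in cube c₂ l₂, ∫⁻ x₃ in cube c₃ l₃, AA g x₁ x₂ x₃)
        = ∫⁻ x₂ in cube c₂ l₂, ∫⁻ x₁ in cube 0 1, ∫⁻ x₃ in cube c₃ l₃, AA g x₁ x₂ x₃ :=
          swapAA hg _ _ _
      _ = ∫⁻ x₂ in cube c₂ l₂, ∫⁻ x₃ in cube c₃ l₃, ∫⁻ x₁ in cube 0 1, AA g x₁ x₂ x₃ :=
          lintegral_congr fun x₂ => swapAA' hg _ _ x₂
      _ ≤ 110592 * ∫⁻ z, g z := by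
          unfold AA
          exact perm_bound hg _ _ _ hμ₂ hμ₃ Measure.restrict_le_self
  calc (∫⁻ x₁ in cube 0 1, ∫⁻ x₂ in cube c₂ l₂, ∫⁻ x₃ in cube c₃ l₃,
        ∫⁻ z in convexHull ℝ {x₁, x₂, x₃}, g z ∂(μH[2]))
      ≤ ∫⁻ x₁ in cube 0 1, ∫⁻ x₂ in cube c₂ l₂, ∫⁻ x₃ in cube c₃ l₃,
          1600 * (AA g x₁ x₂ x₃ + BB g x₁ x₂ x₃ + CC g x₁ x₂ x₃) := step
    _ = ∫⁻ x₁ in cube 0 1, ∫⁻ x₂ in cube c₂ l₂,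
          1600 * ((∫⁻ x₃ in cube c₃ l₃, AA g x₁ x₂ x₃) + (∫⁻ x₃ in cube c₃ l₃, BB g x₁ x₂ x₃)
            + (∫⁻ x₃ in cube c₃ l₃, CC g x₁ x₂ x₃)) :=
        lintegral_congr fun x₁ => lintegral_congr fun x₂ => eq3 x₁ x₂
    _ = ∫⁻ x₁ in cube 0 1,
          1600 * ((∫⁻ x₂ in cube c₂ l₂, ∫⁻ x₃ in cube c₃ l₃, AA g x₁ x₂ x₃)
            + (∫⁻ x₂ in cube c₂ l₂, ∫⁻ x₃ in cube c₃ l₃, BB g x₁ x₂ x₃)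
            + (∫⁻ x₂ in cube c₂ l₂, ∫⁻ x₃ in cube c₃ l₃, CC g x₁ x₂ x₃)) :=
        lintegral_congr fun x₁ => eq2 x₁
    _ = 1600 * ((∫⁻ x₁ in cube 0 1, ∫⁻ x₂ in cube c₂ l₂, ∫⁻ x₃ in cube c₃ l₃, AA g x₁ x₂ x₃)
          + (∫⁻ x₁ in cube 0 1, ∫⁻ x₂ in cube c₂ l₂, ∫⁻ x₃ in cube c₃ l₃, BB g x₁ x₂ x₃)
          + (∫⁻ x₁ in cube 0 1, ∫⁻ x₂ in cube c₂ l₂, ∫⁻ x₃ in cube c₃ l₃, CC g x₁ x₂ x₃)) := eq1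
    _ ≤ 1600 * ((110592 * ∫⁻ z, g z) + (110592 * ∫⁻ z, g z) + (110592 * ∫⁻ z, g z)) := by
        gcongr
    _ = 530841600 * ∫⁻ z, g z := by ring

open NNReal Set

/-- **Lemma 3.8 (b).** Averaging the `H²`-integral of `|v|` over triangles with
vertices in the unit cube `Q₁ = [−1/2,1/2]³` and comparable cubes `Q₂, Q₃ ⊂ B₁₀(0)`
is controlled by `∫_{B₁₀(0)} |v|`. -/
theorem triangle_integral_bound :
    ∃ C : ℝ, 0 < C ∧
      ∀ (c₂ : E3) (l₂ : ℝ), 1 / 4 ≤ l₂ → l₂ ≤ 4 → cube c₂ l₂ ⊆ ball (0 : E3) 10 →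
      ∀ (c₃ : E3) (l₃ : ℝ), 1 / 4 ≤ l₃ → l₃ ≤ 4 → cube c₃ l₃ ⊆ ball (0 : E3) 10 →
      ∀ v : E3 → ℝ, IntegrableOn v (ball (0 : E3) 10) →
        (∀ x ∉ ball (0 : E3) 10, v x = 0) →
        ∫⁻ x₁ in cube 0 1, ∫⁻ x₂ in cube c₂ l₂, ∫⁻ x₃ in cube c₃ l₃,
            ∫⁻ z in convexHull ℝ {x₁, x₂, x₃}, ENNReal.ofReal |v z| ∂(μH[2])
          ≤ ENNReal.ofReal C * ∫⁻ z in ball (0 : E3) 10, ENNReal.ofReal |v z| := by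
  refine ⟨530841600, by norm_num, ?_⟩
  intro c₂ l₂ _ hl₂ hQ₂ c₃ l₃ _ hl₃ hQ₃ v hv hv0
  have hball : MeasurableSet (ball (0:E3) 10) := measurableSet_ball
  -- build a measurable majorant
  have hvm : AEMeasurable v (volume.restrict (ball (0:E3) 10)) :=
    hv.aemeasurable
  set v₀ := hvm.mk v with hv₀def
  have hv₀ : Measurable v₀ := hvm.measurable_mk
  have heq : ∀ᵐ x ∂volume, x ∈ ball (0:E3) 10 → v x = v₀ x :=
    (ae_restrict_iff' hball).1 hvm.ae_eq_mk
  set w : E3 → ℝ := (ball (0:E3) 10).indicator v₀ with hwdef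
  have hw : Measurable w := hv₀.indicator hball
  have hvw : ∀ᵐ x ∂volume, v x = w x := by
    filter_upwards [heq] with x hx
    by_cases hmem : x ∈ ball (0:E3) 10
    · rw [hwdef]; simp [Set.indicator_of_mem hmem]; exact hx hmem
    · rw [hwdef]; simp [Set.indicator_of_notMem hmem]; exact hv0 x hmem
  have hnull : volume {x | v x ≠ w x} = 0 := by
    rw [← ae_iff] at *
    exact hvw
  obtain ⟨N, hNsub, hNmeas, hNnull⟩ := exists_measurable_superset_of_null hnull
  set g : E3 → ℝ≥0∞ := fun z => N.indicator (fun _ => (⊤:ℝ≥0∞)) z + ENNReal.ofReal |w z|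
    with hgdef
  have hg : Measurable g :=
    (measurable_const.indicator hNmeas).add (ENNReal.measurable_ofReal.comp hw.abs)
  have hfg : ∀ z, ENNReal.ofReal |v z| ≤ g z := by
    intro z
    by_cases hz : z ∈ N
    · rw [hgdef]; simp [Set.indicator_of_mem hz]
    · have hzv : v z = w z := by
        by_contra hne
        exact hz (hNsub hne)
      rw [hgdef]
      simp only [Set.indicator_of_notMem hz, zero_add, hzv, le_refl]
  have hgint : (∫⁻ z, g z) = ∫⁻ z in ball (0:E3) 10, ENNReal.ofReal |v z| := by
    have h1 : (∫⁻ z, g z) = (∫⁻ z, N.indicator (fun _ => (⊤:ℝ≥0∞)) z)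
        + ∫⁻ z, ENNReal.ofReal |w z| := by
      rw [hgdef]
      exact lintegral_add_left (measurable_const.indicator hNmeas) _
    have h2 : (∫⁻ z, N.indicator (fun _ => (⊤:ℝ≥0∞)) z) = 0 := by
      rw [lintegral_indicator hNmeas, setLIntegral_const, hNnull, mul_zero]
    have h3 : (∫⁻ z, ENNReal.ofReal |w z|) = ∫⁻ z, ENNReal.ofReal |v z| := by
      refine lintegral_congr_ae ?_
      filter_upwards [hvw] with x hx
      rw [hx]
    have h4 : (∫⁻ z, ENNReal.ofReal |v z|) = ∫⁻ z in ball (0:E3) 10, ENNReal.ofReal |v z| := by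
      rw [← lintegral_add_compl (fun z => ENNReal.ofReal |v z|) hball]
      have h5 : (∫⁻ z in (ball (0:E3) 10)ᶜ, ENNReal.ofReal |v z|) = 0 := by
        have : ∀ z ∈ (ball (0:E3) 10)ᶜ, ENNReal.ofReal |v z| ≤ 0 := by
          intro z hz
          rw [hv0 z hz]
          simp
        have := setLIntegral_mono' (μ := volume) (hball.compl) this
        simpa using this
      rw [h5, add_zero]
    rw [h1, h2, h3, zero_add, h4]
  calc ∫⁻ x₁ in cube 0 1, ∫⁻ x₂ in cube c₂ l₂, ∫⁻ x₃ in cube c₃ l₃,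
          ∫⁻ z in convexHull ℝ {x₁, x₂, x₃}, ENNReal.ofReal |v z| ∂(μH[2])
      ≤ ∫⁻ x₁ in cube 0 1, ∫⁻ x₂ in cube c₂ l₂, ∫⁻ x₃ in cube c₃ l₃,
          ∫⁻ z in convexHull ℝ {x₁, x₂, x₃}, g z ∂(μH[2]) :=
        lintegral_mono fun x₁ => lintegral_mono fun x₂ => lintegral_mono fun x₃ =>
          lintegral_mono fun z => hfg z
    _ ≤ 530841600 * ∫⁻ z, g z := core_bound hg hl₂ hl₃ hQ₂ hQ₃
    _ = ENNReal.ofReal 530841600 * ∫⁻ z in ball (0:E3) 10, ENNReal.ofReal |v z| := by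
        rw [hgint]
        norm_num

end Aux
end
end

section
/- There exists a universal constant C > 0 such that for every x₁ ∈ ℝ³ and every nonnegative measurable function v on ℝ³: ∫_{B_{11}(x₁)} ∫_0^1 v((1−t)x₁ + t x₂) · |x₁ − x₂| dt dx₂ ≤ C ∫_{B_{11}(x₁)} v(z) · |z − x₁|^{−2} dz. -/
open MeasureTheory Metric ENNReal

noncomputable section

local notation "E3" => EuclideanSpace ℝ (Fin 3)


lemma polar3 (g : E3 → ℝ≥0∞) (hg : Measurable g) :
    ∫⁻ x, g x = ∫⁻ ω : sphere (0:E3) 1, ∫⁻ r in Set.Ioi (0:ℝ),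
      ENNReal.ofReal (r^2) * g (r • (ω : E3)) ∂volume ∂(volume.toSphere) := by
  have hdim : Module.finrank ℝ E3 = 3 := finrank_euclideanSpace_fin
  have hG : Measurable (fun p : sphere (0:E3) 1 × Set.Ioi (0:ℝ) => g (p.2.1 • (p.1.1 : E3))) := by
    apply hg.comp
    exact (measurable_subtype_coe.comp measurable_snd).smul (measurable_subtype_coe.comp measurable_fst)
  calc ∫⁻ x, g x = ∫⁻ x in ({0}ᶜ : Set E3), g x := by
        rw [MeasureTheory.restrict_compl_singleton]
    _ = ∫⁻ x : ({0}ᶜ : Set E3), g x ∂(Measure.comap Subtype.val volume) := by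
        rw [lintegral_subtype_comap (measurableSet_singleton _).compl]
    _ = ∫⁻ p : sphere (0:E3) 1 × Set.Ioi (0:ℝ), g (p.2.1 • (p.1.1 : E3))
          ∂((volume : Measure E3).toSphere.prod (.volumeIoiPow (Module.finrank ℝ E3 - 1))) := by
        rw [← (volume : Measure E3).measurePreserving_homeomorphUnitSphereProd.lintegral_comp hG]
        refine lintegral_congr fun x => ?_
        congr 1
        exact congrArg Subtype.val ((homeomorphUnitSphereProd E3).symm_apply_apply x).symm
    _ = ∫⁻ ω : sphere (0:E3) 1, ∫⁻ r : Set.Ioi (0:ℝ), g (r.1 • (ω : E3))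
          ∂(.volumeIoiPow (Module.finrank ℝ E3 - 1)) ∂(volume.toSphere) :=
        lintegral_prod _ hG.aemeasurable
    _ = _ := by
        refine lintegral_congr fun ω => ?_
        rw [hdim]
        show ∫⁻ r : Set.Ioi (0:ℝ), g (r.1 • (ω : E3)) ∂(Measure.volumeIoiPow 2) = _
        rw [Measure.volumeIoiPow, lintegral_withDensity_eq_lintegral_mul _ (by fun_prop) (by fun_prop)]
        rw [← lintegral_subtype_comap (μ := (volume : Measure ℝ))
          (measurableSet_Ioi (a := (0:ℝ)))
          (f := fun r : ℝ => ENNReal.ofReal (r ^ 2) * g (r • (ω : E3)))]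
        rfl

lemma scale_Ioc (F : ℝ → ℝ≥0∞) (hF : Measurable F) {r : ℝ} (hr : 0 < r) :
    ∫⁻ s in Set.Ioc (0:ℝ) r, F s = ENNReal.ofReal r * ∫⁻ t in Set.Ioc (0:ℝ) 1, F (r * t) := by
  have hpre : (r * ·) ⁻¹' Set.Ioc (0:ℝ) r = Set.Ioc (0:ℝ) 1 := by
    ext t
    simp only [Set.mem_preimage, Set.mem_Ioc]
    constructor
    · rintro ⟨h1, h2⟩
      refine ⟨?_, by nlinarith⟩
      by_contra h
      push_neg at h
      nlinarith
    · rintro ⟨h1, h2⟩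
      exact ⟨mul_pos hr h1, by nlinarith⟩
  conv_lhs => rw [← Real.smul_map_volume_mul_left hr.ne']
  rw [setLIntegral_smul_measure, setLIntegral_map measurableSet_Ioc hF (measurable_const_mul r),
    hpre, abs_of_pos hr]
  rw [smul_eq_mul]

/-- **Polar-coordinates estimate.** For every `x₁` and every nonnegative measurable `v`,
`∫_{B₁₁(x₁)} ∫₀¹ v((1−t)x₁+t x₂)|x₁−x₂| dt dx₂ ≤ C ∫_{B₁₁(x₁)} v(z)|z−x₁|⁻² dz`. -/
theorem segment_parametrization_bound :
    ∃ C : ℝ, 0 < C ∧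
      ∀ (x₁ : E3) (v : E3 → ℝ), Measurable v → (∀ x, 0 ≤ v x) →
        ∫⁻ x₂ in ball x₁ 11, ∫⁻ t in Set.Ioc (0 : ℝ) 1,
            ENNReal.ofReal (v ((1 - t) • x₁ + t • x₂) * ‖x₁ - x₂‖)
          ≤ ENNReal.ofReal C *
              ∫⁻ z in ball x₁ 11, ENNReal.ofReal (v z * (‖z - x₁‖ ^ 2)⁻¹) := by
  refine ⟨1331, by norm_num, fun x₁ v hv hv0 => ?_⟩
  set Φ : E3 → ℝ≥0∞ := fun y => ∫⁻ t in Set.Ioc (0:ℝ) 1,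
    ENNReal.ofReal (v (x₁ + t • y) * ‖y‖) with hΦdef
  set Ψ : E3 → ℝ≥0∞ := fun y => ENNReal.ofReal (v (x₁ + y) * (‖y‖ ^ 2)⁻¹) with hΨdef
  have hΦm : Measurable Φ := by
    apply Measurable.lintegral_prod_right'
      (f := fun p : E3 × ℝ => ENNReal.ofReal (v (x₁ + p.2 • p.1) * ‖p.1‖))
    fun_prop
  have hΨm : Measurable Ψ := by fun_prop
  -- translation
  have shift : ∀ (Θ : E3 → ℝ≥0∞),
      ∫⁻ x in ball x₁ 11, Θ (x - x₁) = ∫⁻ y in ball (0:E3) 11, Θ y := by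
    intro Θ
    have himg : ((· + x₁) '' ball (0:E3) 11) = ball x₁ 11 := by
      ext z
      simp only [Set.mem_image, mem_ball, dist_eq_norm]
      constructor
      · rintro ⟨y, hy, rfl⟩; simpa using hy
      · intro hz; exact ⟨z - x₁, by simpa using hz, by abel⟩
    have := (measurePreserving_add_right (volume : Measure E3) x₁).setLIntegral_comp_emb
      (MeasurableEquiv.addRight x₁).measurableEmbedding (fun z => Θ (z - x₁)) (ball 0 11)
    simp only [add_sub_cancel_right] at this
    rw [← himg]
    exact this.symm
  have hLHS : ∫⁻ x₂ in ball x₁ 11, ∫⁻ t in Set.Ioc (0 : ℝ) 1,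
      ENNReal.ofReal (v ((1 - t) • x₁ + t • x₂) * ‖x₁ - x₂‖)
      = ∫⁻ y in ball (0:E3) 11, Φ y := by
    rw [← shift Φ]
    refine lintegral_congr fun x₂ => ?_
    refine lintegral_congr fun t => ?_
    have h1 : (1 - t) • x₁ + t • x₂ = x₁ + t • (x₂ - x₁) := by
      rw [sub_smul, one_smul, smul_sub]; abel
    rw [h1, norm_sub_rev]
  have hRHS : ∫⁻ z in ball x₁ 11, ENNReal.ofReal (v z * (‖z - x₁‖ ^ 2)⁻¹)
      = ∫⁻ y in ball (0:E3) 11, Ψ y := by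
    rw [← shift Ψ]
    refine lintegral_congr fun z => ?_
    simp [hΨdef]
  rw [hLHS, hRHS]
  -- polar coordinates
  set g₁ : E3 → ℝ≥0∞ := (ball (0:E3) 11).indicator Φ with hg₁def
  set g₂ : E3 → ℝ≥0∞ := (ball (0:E3) 11).indicator Ψ with hg₂def
  have hg₁m : Measurable g₁ := hΦm.indicator measurableSet_ball
  have hg₂m : Measurable g₂ := hΨm.indicator measurableSet_ball
  rw [← lintegral_indicator measurableSet_ball Φ, ← lintegral_indicator measurableSet_ball Ψ,
    ← hg₁def, ← hg₂def, polar3 g₁ hg₁m, polar3 g₂ hg₂m]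
  -- key per-direction estimate
  have key : ∀ ω : sphere (0:E3) 1,
      ∫⁻ r in Set.Ioi (0:ℝ), ENNReal.ofReal (r^2) * g₁ (r • (ω:E3))
        ≤ ENNReal.ofReal 1331 * ∫⁻ r in Set.Ioi (0:ℝ), ENNReal.ofReal (r^2) * g₂ (r • (ω:E3)) := by
    intro ω
    have hω : ‖(ω:E3)‖ = 1 := by
      simpa [mem_sphere_iff_norm] using ω.2
    have hnorm : ∀ r : ℝ, 0 < r → ‖r • (ω:E3)‖ = r := fun r hr => by
      rw [norm_smul, hω, mul_one, Real.norm_eq_abs, abs_of_pos hr]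
    set F : ℝ → ℝ≥0∞ := fun s => ENNReal.ofReal (v (x₁ + s • (ω:E3))) with hFdef
    have hFm : Measurable F := by fun_prop
    set A : ℝ≥0∞ := ∫⁻ s in Set.Ioo (0:ℝ) 11, F s with hAdef
    -- RHS computation
    have hR : ∫⁻ r in Set.Ioi (0:ℝ), ENNReal.ofReal (r^2) * g₂ (r • (ω:E3)) = A := by
      have hcong : ∀ r ∈ Set.Ioi (0:ℝ), ENNReal.ofReal (r^2) * g₂ (r • (ω:E3))
          = (Set.Ioo (0:ℝ) 11).indicator F r := by
        intro r hr
        rw [Set.mem_Ioi] at hr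
        by_cases h11 : r < 11
        · have hmem : r • (ω:E3) ∈ ball (0:E3) 11 := by
            rw [mem_ball_zero_iff, hnorm r hr]; exact h11
          rw [hg₂def, Set.indicator_of_mem hmem, Set.indicator_of_mem (Set.mem_Ioo.mpr ⟨hr, h11⟩), hΨdef]
          simp only
          rw [hnorm r hr, ← ENNReal.ofReal_mul (sq_nonneg r), hFdef]
          congr 1
          field_simp
        · have hmem : r • (ω:E3) ∉ ball (0:E3) 11 := by
            rw [mem_ball_zero_iff, hnorm r hr]; exact h11
          rw [hg₂def, Set.indicator_of_notMem hmem,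
            Set.indicator_of_notMem (fun h => h11 h.2), mul_zero]
      rw [setLIntegral_congr_fun measurableSet_Ioi
        hcong, lintegral_indicator measurableSet_Ioo,
        Measure.restrict_restrict measurableSet_Ioo, Set.inter_eq_left.2
          (fun x hx => hx.1)]
    -- LHS bound
    have hL : ∫⁻ r in Set.Ioi (0:ℝ), ENNReal.ofReal (r^2) * g₁ (r • (ω:E3))
        ≤ ENNReal.ofReal 1331 * A := by
      have hbound : ∀ r ∈ Set.Ioi (0:ℝ), ENNReal.ofReal (r^2) * g₁ (r • (ω:E3))
          ≤ (Set.Ioo (0:ℝ) 11).indicator (fun _ => ENNReal.ofReal 121 * A) r := by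
        intro r hr
        rw [Set.mem_Ioi] at hr
        by_cases h11 : r < 11
        · have hmem : r • (ω:E3) ∈ ball (0:E3) 11 := by
            rw [mem_ball_zero_iff, hnorm r hr]; exact h11
          rw [hg₁def, Set.indicator_of_mem hmem, Set.indicator_of_mem (Set.mem_Ioo.mpr ⟨hr, h11⟩)]
          have hΦval : Φ (r • (ω:E3)) = ∫⁻ s in Set.Ioc (0:ℝ) r, F s := by
            rw [scale_Ioc F hFm hr, hΦdef]
            simp only
            rw [← lintegral_const_mul' _ _ ofReal_ne_top]
            refine lintegral_congr fun t => ?_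
            rw [hnorm r hr, smul_smul, ENNReal.ofReal_mul (hv0 _), hFdef]
            simp only
            rw [mul_comm (t:ℝ) r]
            ring
          rw [hΦval]
          have h1 : (∫⁻ s in Set.Ioc (0:ℝ) r, F s) ≤ A := by
            rw [hAdef]
            exact lintegral_mono_set (fun x hx => ⟨hx.1, lt_of_le_of_lt hx.2 h11⟩)
          have h2 : ENNReal.ofReal (r^2) ≤ ENNReal.ofReal 121 := by
            apply ENNReal.ofReal_le_ofReal; nlinarith
          exact mul_le_mul' h2 h1
        · have hmem : r • (ω:E3) ∉ ball (0:E3) 11 := by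
            rw [mem_ball_zero_iff, hnorm r hr]; exact h11
          rw [hg₁def, Set.indicator_of_notMem hmem, mul_zero]
          exact zero_le
      calc ∫⁻ r in Set.Ioi (0:ℝ), ENNReal.ofReal (r^2) * g₁ (r • (ω:E3))
          ≤ ∫⁻ r in Set.Ioi (0:ℝ),
              (Set.Ioo (0:ℝ) 11).indicator (fun _ => ENNReal.ofReal 121 * A) r :=
            setLIntegral_mono' measurableSet_Ioi hbound
        _ = ENNReal.ofReal 121 * A * volume (Set.Ioo (0:ℝ) 11) := by
            rw [lintegral_indicator measurableSet_Ioo,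
              Measure.restrict_restrict measurableSet_Ioo,
              Set.inter_eq_left.2 (fun x hx => hx.1), setLIntegral_const]
        _ = ENNReal.ofReal 1331 * A := by
            rw [Real.volume_Ioo]
            rw [mul_comm (ENNReal.ofReal 121 * A), ← mul_assoc, ← ENNReal.ofReal_mul (by norm_num)]
            norm_num
    calc ∫⁻ r in Set.Ioi (0:ℝ), ENNReal.ofReal (r^2) * g₁ (r • (ω:E3))
        ≤ ENNReal.ofReal 1331 * A := hL
      _ = ENNReal.ofReal 1331 * ∫⁻ r in Set.Ioi (0:ℝ),
            ENNReal.ofReal (r^2) * g₂ (r • (ω:E3)) := by rw [hR]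
  calc ∫⁻ ω : sphere (0:E3) 1, ∫⁻ r in Set.Ioi (0:ℝ),
        ENNReal.ofReal (r^2) * g₁ (r • (ω:E3)) ∂volume ∂(volume.toSphere)
      ≤ ∫⁻ ω : sphere (0:E3) 1, ENNReal.ofReal 1331 * ∫⁻ r in Set.Ioi (0:ℝ),
        ENNReal.ofReal (r^2) * g₂ (r • (ω:E3)) ∂volume ∂(volume.toSphere) :=
        lintegral_mono key
    _ = ENNReal.ofReal 1331 * ∫⁻ ω : sphere (0:E3) 1, ∫⁻ r in Set.Ioi (0:ℝ),
        ENNReal.ofReal (r^2) * g₂ (r • (ω:E3)) ∂volume ∂(volume.toSphere) :=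
        lintegral_const_mul' _ _ ofReal_ne_top
end
end
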